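/- Let d ≥ 1 be an integer, α ∈ (1,2), β ∈ ((d+α)/2, d+α), and γ ∈ (0, min(β, d)/α). Then there is a constant C, depending only on d, α, β, γ, such that for all t > 0, all r ≥ 0, and all w > 0: ∫_0^∞ s^{γ−1} · (s+t)^{−d/α} · ( (s+t)^{1/α} / ( (s+t)^{1/α} + r ) )^{d+α} · min( 1, w/(s+t)^{1/α} )^{β−d} ds ≤ C · t^{−(d−γα)/α} · ( t^{1/α} / ( t^{1/α} + r ) )^{d−αγ} · min( 1, w/(t^{1/α} + r) )^{β−d}. -/

import Mathlib

open MeasureTheory Set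

/-- Time-integral estimate underlying the Riesz-heat kernel bound (2.16) of the paper:
for `γ ∈ (0, min(β,d)/α)`,
`∫_0^∞ s^{γ−1} (s+t)^{−d/α} ((s+t)^{1/α}/((s+t)^{1/α}+r))^{d+α} min(1, w/(s+t)^{1/α})^{β−d} ds
≤ C t^{−(d−γα)/α} (t^{1/α}/(t^{1/α}+r))^{d−αγ} min(1, w/(t^{1/α}+r))^{β−d}`. -/
theorem time_integral_riesz_heat_kappa
    (d : ℕ) (hd : 1 ≤ d) (α β γ : ℝ)
    (hα1 : 1 < α) (hα2 : α < 2)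
    (hβ1 : ((d : ℝ) + α) / 2 < β) (hβ2 : β < (d : ℝ) + α)
    (hγ1 : 0 < γ) (hγ2 : γ < min β (d : ℝ) / α) :
    ∃ C : ℝ, 0 < C ∧
      ∀ t r w : ℝ, 0 < t → 0 ≤ r → 0 < w →
        (∫⁻ s in Set.Ioi (0 : ℝ), ENNReal.ofReal
            (s ^ (γ - 1) * (s + t) ^ (-(d : ℝ) / α) *
              ((s + t) ^ (1 / α) / ((s + t) ^ (1 / α) + r)) ^ ((d : ℝ) + α) *
              min 1 (w / (s + t) ^ (1 / α)) ^ (β - d)))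
          ≤ ENNReal.ofReal
              (C * t ^ (-((d : ℝ) - γ * α) / α) *
                (t ^ (1 / α) / (t ^ (1 / α) + r)) ^ ((d : ℝ) - α * γ) *
                min 1 (w / (t ^ (1 / α) + r)) ^ (β - d)) := by
  have hα0 : (0 : ℝ) < α := by linarith
  set D : ℝ := (d : ℝ) with hDdef
  have hD1 : (1 : ℝ) ≤ D := by rw [hDdef]; exact_mod_cast hd
  have hβpos : 0 < β := by linarith
  set mbd : ℝ := min β D with hmbddef
  have hmbd0 : 0 < mbd := lt_min hβpos (by linarith)
  have hmbdD : mbd ≤ D := min_le_right _ _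
  have hγ2' : γ < mbd / α := hγ2
  set κ : ℝ := mbd / α - γ with hκdef
  have hκ : 0 < κ := by simp only [hκdef, sub_pos]; exact hγ2'
  have hκγ : γ + κ = mbd / α := by rw [hκdef]; ring
  refine ⟨1 / γ + 2 ^ κ / κ, by positivity, ?_⟩
  intro t r w ht hr hw
  have hT : (0 : ℝ) < t ^ (1 / α) := Real.rpow_pos_of_pos ht _
  set T : ℝ := t ^ (1 / α) with hTdef
  set ρ : ℝ := T + r with hρdef
  have hρ : 0 < ρ := by positivity
  set X : ℝ := ρ ^ α with hXdef
  have hX : 0 < X := Real.rpow_pos_of_pos hρ _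
  have hTα : T ^ α = t := by
    rw [hTdef, ← Real.rpow_mul ht.le, one_div_mul_cancel hα0.ne', Real.rpow_one]
  have htX : t ≤ X := by
    rw [← hTα, hXdef]
    exact Real.rpow_le_rpow hT.le (le_add_of_nonneg_right hr) hα0.le
  have hmρ : 0 < min 1 (w / ρ) := lt_min one_pos (by positivity)
  set M : ℝ := min 1 (w / ρ) ^ (β - D) with hMdef
  have hM : 0 < M := Real.rpow_pos_of_pos hmρ _
  -- pointwise bound
  have key : ∀ s : ℝ, s ∈ Ioi (0 : ℝ) →
      s ^ (γ - 1) * (s + t) ^ (-D / α) *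
        ((s + t) ^ (1 / α) / ((s + t) ^ (1 / α) + r)) ^ (D + α) *
        min 1 (w / (s + t) ^ (1 / α)) ^ (β - D)
      ≤ M * ((if s ≤ X then s ^ (γ - 1) * ρ ^ (-D) else 0) +
             (if X / 2 < s then s ^ (-1 - κ) * ρ ^ (mbd - D) else 0)) := by
    intro s hs
    rw [mem_Ioi] at hs
    have hst : 0 < s + t := by linarith
    set u : ℝ := (s + t) ^ (1 / α) with hudef
    have hu : 0 < u := Real.rpow_pos_of_pos hst _
    have huα : u ^ α = s + t := by
      rw [hudef, ← Real.rpow_mul hst.le, one_div_mul_cancel hα0.ne', Real.rpow_one]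
    have huT : T ≤ u := Real.rpow_le_rpow ht.le (by linarith) (by positivity)
    have hρu : ρ ≤ u + r := by rw [hρdef]; linarith
    have hur : 0 < u + r := lt_of_lt_of_le hρ hρu
    set A : ℝ := u / (u + r) with hAdef
    have hA0 : 0 < A := div_pos hu hur
    have hA1 : A ≤ 1 := div_le_one_of_le₀ (by linarith) hur.le
    have hAu : A ≤ u / ρ := div_le_div_of_nonneg_left hu.le hρ hρu
    set m1 : ℝ := min 1 (w / u) with hm1def
    have hm10 : 0 < m1 := lt_min one_pos (div_pos hw hu)
    have hm11 : m1 ≤ 1 := min_le_left _ _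
    have hud : (s + t) ^ (-D / α) = u ^ (-D) := by
      rw [hudef, ← Real.rpow_mul hst.le]
      congr 1
      ring
    have hF2 : A * m1 ≤ min 1 (w / ρ) := by
      refine le_min (mul_le_one₀ hA1 hm10.le hm11) ?_
      have h1 : A * m1 ≤ A * (w / u) := mul_le_mul_of_nonneg_left (min_le_right _ _) hA0.le
      have h2 : A * (w / u) = w / (u + r) := by
        rw [hAdef]; field_simp
      rw [h2] at h1
      exact h1.trans (div_le_div_of_nonneg_left hw.le hρ hρu)
    have hF3 : ρ ≤ u → min 1 (w / ρ) ≤ u / ρ * m1 := by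
      intro h
      have h1 : (1 : ℝ) ≤ u / ρ := (one_le_div hρ).2 h
      rcases le_total 1 (w / u) with hle | hle
      · rw [hm1def, min_eq_left hle, mul_one]
        exact (min_le_left _ _).trans h1
      · rw [hm1def, min_eq_right hle]
        have he : u / ρ * (w / u) = w / ρ := by field_simp
        rw [he]
        exact min_le_right _ _
    -- auxiliary: for exponents E ≥ D, u ≤ ρ: u^(-D) * A^E ≤ ρ^(-D)
    have hpow : ∀ E : ℝ, D ≤ E → u ≤ ρ → u ^ (-D) * A ^ E ≤ ρ ^ (-D) := by
      intro E hE h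
      have g1 : A ^ E ≤ (u / ρ) ^ E := Real.rpow_le_rpow hA0.le hAu (by linarith)
      have g2 : u ^ (-D) * (u / ρ) ^ E = u ^ (E - D) * (ρ ^ E)⁻¹ := by
        rw [Real.div_rpow hu.le hρ.le, div_eq_mul_inv, ← mul_assoc, ← Real.rpow_add hu,
          show -D + E = E - D from by ring]
      calc u ^ (-D) * A ^ E ≤ u ^ (-D) * (u / ρ) ^ E :=
            mul_le_mul_of_nonneg_left g1 (by positivity)
        _ = u ^ (E - D) * (ρ ^ E)⁻¹ := g2
        _ ≤ ρ ^ (E - D) * (ρ ^ E)⁻¹ := by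
            have : u ^ (E - D) ≤ ρ ^ (E - D) := Real.rpow_le_rpow hu.le h (by linarith)
            exact mul_le_mul_of_nonneg_right this (by positivity)
        _ = ρ ^ (-D) := by
            rw [← Real.rpow_neg hρ.le, ← Real.rpow_add hρ]
            congr 1
            ring
    have core : (s + t) ^ (-D / α) * A ^ (D + α) * m1 ^ (β - D) ≤
        (if u ≤ ρ then ρ ^ (-D) * M
         else (s + t) ^ (-(γ + κ)) * ρ ^ (mbd - D) * M) := by
      rw [hud]
      rcases le_or_gt u ρ with h | h
      · rw [if_pos h]
        rcases le_or_gt D β with hq | hq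
        · -- β ≥ D
          have e1 : A ^ (D + α) = A ^ (β - D) * A ^ (2 * D + α - β) := by
            rw [← Real.rpow_add hA0]; congr 1; ring
          have f1 : A ^ (β - D) * m1 ^ (β - D) = (A * m1) ^ (β - D) :=
            (Real.mul_rpow hA0.le hm10.le).symm
          have f2 : (A * m1) ^ (β - D) ≤ M := by
            rw [hMdef]
            exact Real.rpow_le_rpow (by positivity) hF2 (by linarith)
          have f3 : u ^ (-D) * A ^ (2 * D + α - β) ≤ ρ ^ (-D) :=
            hpow _ (by linarith) h
          calc u ^ (-D) * A ^ (D + α) * m1 ^ (β - D)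
              = (A ^ (β - D) * m1 ^ (β - D)) * (u ^ (-D) * A ^ (2 * D + α - β)) := by
                rw [e1]; ring
            _ = (A * m1) ^ (β - D) * (u ^ (-D) * A ^ (2 * D + α - β)) := by rw [f1]
            _ ≤ M * ρ ^ (-D) := mul_le_mul f2 f3 (by positivity) hM.le
            _ = ρ ^ (-D) * M := mul_comm _ _
        · -- β < D
          have f2 : m1 ^ (β - D) ≤ M := by
            have hle : min 1 (w / ρ) ≤ m1 :=
              min_le_min le_rfl (div_le_div_of_nonneg_left hw.le hu h)
            rw [hMdef]
            exact Real.rpow_le_rpow_of_nonpos hmρ hle (by linarith)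
          have f3 : u ^ (-D) * A ^ (D + α) ≤ ρ ^ (-D) := hpow _ (by linarith) h
          calc u ^ (-D) * A ^ (D + α) * m1 ^ (β - D)
              ≤ ρ ^ (-D) * M := mul_le_mul f3 f2 (by positivity) (by positivity)
            _ = ρ ^ (-D) * M := rfl
      · rw [if_neg (not_le.2 h)]
        have hstm : (s + t) ^ (-(γ + κ)) = u ^ (-mbd) := by
          have hexp : α * (-(γ + κ)) = -mbd := by
            rw [hκγ]
            field_simp
          rw [← huα, ← Real.rpow_mul hu.le, hexp]
        rw [hstm]
        rcases le_or_gt D β with hq | hq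
        · -- β ≥ D : mbd = D
          have hmbdeq : mbd = D := min_eq_right hq
          have f1 : A ^ (D + α) ≤ A ^ (β - D) :=
            Real.rpow_le_rpow_of_exponent_ge hA0 hA1 (by linarith)
          have f2 : A ^ (β - D) * m1 ^ (β - D) ≤ M := by
            rw [← Real.mul_rpow hA0.le hm10.le, hMdef]
            exact Real.rpow_le_rpow (by positivity) hF2 (by linarith)
          calc u ^ (-D) * A ^ (D + α) * m1 ^ (β - D)
              ≤ u ^ (-D) * A ^ (β - D) * m1 ^ (β - D) := by
                refine mul_le_mul_of_nonneg_right
                  (mul_le_mul_of_nonneg_left f1 (by positivity)) (by positivity)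
            _ = u ^ (-D) * (A ^ (β - D) * m1 ^ (β - D)) := by ring
            _ ≤ u ^ (-D) * M := mul_le_mul_of_nonneg_left f2 (by positivity)
            _ = u ^ (-mbd) * ρ ^ (mbd - D) * M := by
                rw [hmbdeq, sub_self, Real.rpow_zero, mul_one]
        · -- β < D : mbd = β
          have hmbdeq : mbd = β := min_eq_left hq.le
          have huρ0 : (0 : ℝ) < u / ρ := div_pos hu hρ
          have f1 : A ^ (D + α) ≤ 1 := Real.rpow_le_one hA0.le hA1 (by linarith)
          have h3 : (u / ρ * m1) ^ (β - D) ≤ M := by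
            rw [hMdef]
            exact Real.rpow_le_rpow_of_nonpos hmρ (hF3 h.le) (by linarith)
          have h4 : m1 ^ (β - D) ≤ (u / ρ) ^ (D - β) * M := by
            have e : (u / ρ * m1) ^ (β - D) = (u / ρ) ^ (β - D) * m1 ^ (β - D) :=
              Real.mul_rpow huρ0.le hm10.le
            have e2 : (u / ρ) ^ (D - β) * ((u / ρ) ^ (β - D) * m1 ^ (β - D)) = m1 ^ (β - D) := by
              rw [← mul_assoc, ← Real.rpow_add huρ0,
                show D - β + (β - D) = 0 from by ring, Real.rpow_zero, one_mul]
            calc m1 ^ (β - D) = (u / ρ) ^ (D - β) * (u / ρ * m1) ^ (β - D) := by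
                  rw [e, e2]
              _ ≤ (u / ρ) ^ (D - β) * M := mul_le_mul_of_nonneg_left h3 (by positivity)
          calc u ^ (-D) * A ^ (D + α) * m1 ^ (β - D)
              ≤ u ^ (-D) * 1 * ((u / ρ) ^ (D - β) * M) := by
                refine mul_le_mul (mul_le_mul_of_nonneg_left f1 (by positivity)) h4
                  (by positivity) (by positivity)
            _ = (u ^ (-D) * u ^ (D - β)) * (ρ ^ (D - β))⁻¹ * M := by
                rw [Real.div_rpow hu.le hρ.le, mul_one, div_eq_mul_inv]; ring
            _ = u ^ (-mbd) * ρ ^ (mbd - D) * M := by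
                rw [← Real.rpow_add hu, show -D + (D - β) = -β from by ring,
                  ← Real.rpow_neg hρ.le, show -(D - β) = β - D from by ring, hmbdeq]
    -- now distinguish regions to produce the final bound
    have hnn2 : (0 : ℝ) ≤ if X / 2 < s then s ^ (-1 - κ) * ρ ^ (mbd - D) else 0 := by
      split <;> positivity
    have hnn1 : (0 : ℝ) ≤ if s ≤ X then s ^ (γ - 1) * ρ ^ (-D) else 0 := by
      split <;> positivity
    rcases le_or_gt u ρ with h | h
    · have hsX : s ≤ X := by
        have h1 : u ^ α ≤ ρ ^ α := Real.rpow_le_rpow hu.le h hα0.le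
        rw [huα] at h1
        rw [hXdef]; linarith
      rw [if_pos hsX]
      have hc := core
      rw [if_pos h] at hc
      calc s ^ (γ - 1) * (s + t) ^ (-D / α) * A ^ (D + α) * m1 ^ (β - D)
          = s ^ (γ - 1) * ((s + t) ^ (-D / α) * A ^ (D + α) * m1 ^ (β - D)) := by ring
        _ ≤ s ^ (γ - 1) * (ρ ^ (-D) * M) := mul_le_mul_of_nonneg_left hc (by positivity)
        _ = M * (s ^ (γ - 1) * ρ ^ (-D)) := by ring
        _ ≤ M * (s ^ (γ - 1) * ρ ^ (-D) +
              if X / 2 < s then s ^ (-1 - κ) * ρ ^ (mbd - D) else 0) := by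
            refine mul_le_mul_of_nonneg_left (le_add_of_nonneg_right hnn2) hM.le
    · have hXst : X < s + t := by
        rw [hXdef, ← huα]
        exact Real.rpow_lt_rpow hρ.le h hα0
      have hc := core
      rw [if_neg (not_le.2 h)] at hc
      have hγκ0 : -(γ + κ) ≤ 0 := by linarith
      rcases le_or_gt s t with hst' | hst'
      · -- s ≤ t ≤ X
        have hsX : s ≤ X := hst'.trans htX
        rw [if_pos hsX]
        have h5 : (s + t) ^ (-(γ + κ)) ≤ X ^ (-(γ + κ)) :=
          Real.rpow_le_rpow_of_nonpos hX hXst.le hγκ0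
        have h6 : X ^ (-(γ + κ)) = ρ ^ (-mbd) := by
          rw [hXdef, ← Real.rpow_mul hρ.le]
          congr 1
          rw [hκγ]
          field_simp
        calc s ^ (γ - 1) * (s + t) ^ (-D / α) * A ^ (D + α) * m1 ^ (β - D)
            = s ^ (γ - 1) * ((s + t) ^ (-D / α) * A ^ (D + α) * m1 ^ (β - D)) := by ring
          _ ≤ s ^ (γ - 1) * ((s + t) ^ (-(γ + κ)) * ρ ^ (mbd - D) * M) :=
              mul_le_mul_of_nonneg_left hc (by positivity)
          _ ≤ s ^ (γ - 1) * (ρ ^ (-mbd) * ρ ^ (mbd - D) * M) := by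
              refine mul_le_mul_of_nonneg_left ?_ (by positivity)
              refine mul_le_mul_of_nonneg_right
                (mul_le_mul_of_nonneg_right (h6 ▸ h5) (by positivity)) hM.le
          _ = M * (s ^ (γ - 1) * ρ ^ (-D)) := by
              rw [← Real.rpow_add hρ, show -mbd + (mbd - D) = -D from by ring]; ring
          _ ≤ M * (s ^ (γ - 1) * ρ ^ (-D) +
                if X / 2 < s then s ^ (-1 - κ) * ρ ^ (mbd - D) else 0) :=
              mul_le_mul_of_nonneg_left (le_add_of_nonneg_right hnn2) hM.le
      · -- t < s, so X/2 < s
        have hs2 : X / 2 < s := by linarith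
        rw [if_pos hs2]
        have h5 : (s + t) ^ (-(γ + κ)) ≤ s ^ (-(γ + κ)) :=
          Real.rpow_le_rpow_of_nonpos hs (by linarith) hγκ0
        calc s ^ (γ - 1) * (s + t) ^ (-D / α) * A ^ (D + α) * m1 ^ (β - D)
            = s ^ (γ - 1) * ((s + t) ^ (-D / α) * A ^ (D + α) * m1 ^ (β - D)) := by ring
          _ ≤ s ^ (γ - 1) * ((s + t) ^ (-(γ + κ)) * ρ ^ (mbd - D) * M) :=
              mul_le_mul_of_nonneg_left hc (by positivity)
          _ ≤ s ^ (γ - 1) * (s ^ (-(γ + κ)) * ρ ^ (mbd - D) * M) := by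
              refine mul_le_mul_of_nonneg_left ?_ (by positivity)
              exact mul_le_mul_of_nonneg_right
                (mul_le_mul_of_nonneg_right h5 (by positivity)) hM.le
          _ = M * (s ^ (-1 - κ) * ρ ^ (mbd - D)) := by
              rw [show s ^ (γ - 1) * (s ^ (-(γ + κ)) * ρ ^ (mbd - D) * M)
                  = (s ^ (γ - 1) * s ^ (-(γ + κ))) * ρ ^ (mbd - D) * M from by ring,
                ← Real.rpow_add hs, show γ - 1 + -(γ + κ) = -1 - κ from by ring]
              ring
          _ ≤ M * ((if s ≤ X then s ^ (γ - 1) * ρ ^ (-D) else 0) +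
                s ^ (-1 - κ) * ρ ^ (mbd - D)) :=
              mul_le_mul_of_nonneg_left (le_add_of_nonneg_left hnn1) hM.le
  -- the integral computation
  refine le_trans (lintegral_mono_ae ((ae_restrict_iff' measurableSet_Ioi).2
    (ae_of_all _ fun s hs => ENNReal.ofReal_le_ofReal (key s hs)))) ?_
  have h1meas : Measurable fun s : ℝ =>
      ENNReal.ofReal (if s ≤ X then s ^ (γ - 1) * ρ ^ (-D) else 0) :=
    ENNReal.measurable_ofReal.comp (Measurable.ite measurableSet_Iic
      ((measurable_id.pow_const _).mul_const _) measurable_const)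
  have split1 : (∫⁻ s in Ioi (0 : ℝ), ENNReal.ofReal (M *
        ((if s ≤ X then s ^ (γ - 1) * ρ ^ (-D) else 0) +
         (if X / 2 < s then s ^ (-1 - κ) * ρ ^ (mbd - D) else 0)))) =
      ENNReal.ofReal M *
        ((∫⁻ s in Ioi (0 : ℝ), ENNReal.ofReal (if s ≤ X then s ^ (γ - 1) * ρ ^ (-D) else 0)) +
         (∫⁻ s in Ioi (0 : ℝ),
            ENNReal.ofReal (if X / 2 < s then s ^ (-1 - κ) * ρ ^ (mbd - D) else 0))) := by
    rw [← lintegral_add_left h1meas, ← lintegral_const_mul' _ _ ENNReal.ofReal_ne_top]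
    refine setLIntegral_congr_fun measurableSet_Ioi (fun s hs => ?_)
    rw [mem_Ioi] at hs
    have hnn1 : (0 : ℝ) ≤ if s ≤ X then s ^ (γ - 1) * ρ ^ (-D) else 0 := by
      split <;> positivity
    have hnn2 : (0 : ℝ) ≤ if X / 2 < s then s ^ (-1 - κ) * ρ ^ (mbd - D) else 0 := by
      split <;> positivity
    rw [ENNReal.ofReal_mul hM.le, ENNReal.ofReal_add hnn1 hnn2]
  have hJ1 : (∫⁻ s in Ioi (0 : ℝ),
        ENNReal.ofReal (if s ≤ X then s ^ (γ - 1) * ρ ^ (-D) else 0))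
      = ENNReal.ofReal ((X ^ γ / γ) * ρ ^ (-D)) := by
    rw [← Ioc_union_Ioi_eq_Ioi hX.le,
      lintegral_union measurableSet_Ioi Ioc_disjoint_Ioi_same]
    have e2 : (∫⁻ s in Ioi X,
        ENNReal.ofReal (if s ≤ X then s ^ (γ - 1) * ρ ^ (-D) else 0)) = 0 := by
      have hcong : ∀ᵐ x ∂(volume : Measure ℝ), x ∈ Ioi X →
          ENNReal.ofReal (if x ≤ X then x ^ (γ - 1) * ρ ^ (-D) else 0) = 0 :=
        ae_of_all _ fun x hx => by rw [if_neg (not_le.2 (mem_Ioi.1 hx)), ENNReal.ofReal_zero]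
      rw [setLIntegral_congr_fun_ae measurableSet_Ioi hcong, lintegral_zero]
    have e1 : (∫⁻ s in Ioc (0 : ℝ) X,
        ENNReal.ofReal (if s ≤ X then s ^ (γ - 1) * ρ ^ (-D) else 0))
        = ENNReal.ofReal ((X ^ γ / γ) * ρ ^ (-D)) := by
      have hcong : ∀ᵐ x ∂(volume : Measure ℝ), x ∈ Ioc (0 : ℝ) X →
          ENNReal.ofReal (if x ≤ X then x ^ (γ - 1) * ρ ^ (-D) else 0)
            = ENNReal.ofReal (x ^ (γ - 1) * ρ ^ (-D)) :=
        ae_of_all _ fun x hx => by rw [if_pos hx.2]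
      rw [setLIntegral_congr_fun_ae measurableSet_Ioc hcong]
      have hInt : IntegrableOn (fun s : ℝ => s ^ (γ - 1) * ρ ^ (-D)) (Ioc 0 X) :=
        (intervalIntegrable_iff_integrableOn_Ioc_of_le hX.le).1
          ((intervalIntegral.intervalIntegrable_rpow' (by linarith)).mul_const _)
      have hnn : 0 ≤ᵐ[volume.restrict (Ioc (0 : ℝ) X)]
          fun s : ℝ => s ^ (γ - 1) * ρ ^ (-D) := by
        refine (ae_restrict_iff' measurableSet_Ioc).2 (ae_of_all _ fun x hx => ?_)
        have hx0 : 0 < x := hx.1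
        positivity
      rw [← ofReal_integral_eq_lintegral_ofReal hInt hnn]
      congr 1
      rw [MeasureTheory.integral_mul_const]
      congr 1
      rw [← intervalIntegral.integral_of_le hX.le, integral_rpow (Or.inl (by linarith)),
        show γ - 1 + 1 = γ from by ring, Real.zero_rpow hγ1.ne', sub_zero]
    rw [e1, e2, add_zero]
  have hX2 : (0 : ℝ) < X / 2 := by positivity
  have hJ2 : (∫⁻ s in Ioi (0 : ℝ),
        ENNReal.ofReal (if X / 2 < s then s ^ (-1 - κ) * ρ ^ (mbd - D) else 0))
      = ENNReal.ofReal (((X / 2) ^ (-κ) / κ) * ρ ^ (mbd - D)) := by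
    rw [← Ioc_union_Ioi_eq_Ioi hX2.le,
      lintegral_union measurableSet_Ioi Ioc_disjoint_Ioi_same]
    have e1 : (∫⁻ s in Ioc (0 : ℝ) (X / 2),
        ENNReal.ofReal (if X / 2 < s then s ^ (-1 - κ) * ρ ^ (mbd - D) else 0)) = 0 := by
      have hcong : ∀ᵐ x ∂(volume : Measure ℝ), x ∈ Ioc (0 : ℝ) (X / 2) →
          ENNReal.ofReal (if X / 2 < x then x ^ (-1 - κ) * ρ ^ (mbd - D) else 0) = 0 :=
        ae_of_all _ fun x hx => by rw [if_neg (not_lt.2 hx.2), ENNReal.ofReal_zero]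
      rw [setLIntegral_congr_fun_ae measurableSet_Ioc hcong, lintegral_zero]
    have e2 : (∫⁻ s in Ioi (X / 2),
        ENNReal.ofReal (if X / 2 < s then s ^ (-1 - κ) * ρ ^ (mbd - D) else 0))
        = ENNReal.ofReal (((X / 2) ^ (-κ) / κ) * ρ ^ (mbd - D)) := by
      have hcong : ∀ᵐ x ∂(volume : Measure ℝ), x ∈ Ioi (X / 2) →
          ENNReal.ofReal (if X / 2 < x then x ^ (-1 - κ) * ρ ^ (mbd - D) else 0)
            = ENNReal.ofReal (x ^ (-1 - κ) * ρ ^ (mbd - D)) :=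
        ae_of_all _ fun x hx => by rw [if_pos (mem_Ioi.1 hx)]
      rw [setLIntegral_congr_fun_ae measurableSet_Ioi hcong]
      have hInt : IntegrableOn (fun s : ℝ => s ^ (-1 - κ) * ρ ^ (mbd - D)) (Ioi (X / 2)) :=
        (integrableOn_Ioi_rpow_of_lt (by linarith) hX2).mul_const _
      have hnn : 0 ≤ᵐ[volume.restrict (Ioi (X / 2))]
          fun s : ℝ => s ^ (-1 - κ) * ρ ^ (mbd - D) := by
        refine (ae_restrict_iff' measurableSet_Ioi).2 (ae_of_all _ fun x hx => ?_)
        have hx0 : 0 < x := hX2.trans (mem_Ioi.1 hx)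
        positivity
      rw [← ofReal_integral_eq_lintegral_ofReal hInt hnn]
      congr 1
      rw [MeasureTheory.integral_mul_const]
      congr 1
      rw [integral_Ioi_rpow_of_lt (by linarith) hX2,
        show -1 - κ + 1 = -κ from by ring, neg_div_neg_eq]
    rw [e1, e2, zero_add]
  rw [split1, hJ1, hJ2]
  have hnnA : (0 : ℝ) ≤ (X ^ γ / γ) * ρ ^ (-D) := by positivity
  have hnnB : (0 : ℝ) ≤ ((X / 2) ^ (-κ) / κ) * ρ ^ (mbd - D) := by positivity
  rw [← ENNReal.ofReal_add hnnA hnnB, ← ENNReal.ofReal_mul hM.le]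
  apply ENNReal.ofReal_le_ofReal
  -- final real computation
  have hA' : (X ^ γ / γ) * ρ ^ (-D) = ρ ^ (α * γ - D) * (1 / γ) := by
    have b1 : X ^ γ = ρ ^ (α * γ) := by rw [hXdef, ← Real.rpow_mul hρ.le]
    have b2 : ρ ^ (α * γ) * ρ ^ (-D) = ρ ^ (α * γ - D) := by
      rw [show α * γ - D = α * γ + -D from by ring, ← Real.rpow_add hρ]
    rw [b1, div_mul_eq_mul_div, b2, mul_one_div]
  have hB' : ((X / 2) ^ (-κ) / κ) * ρ ^ (mbd - D) = ρ ^ (α * γ - D) * (2 ^ κ / κ) := by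
    have b1 : (X / 2) ^ (-κ) = ρ ^ (α * γ - mbd) * 2 ^ κ := by
      rw [hXdef, Real.div_rpow (Real.rpow_nonneg hρ.le _) (by norm_num), ← Real.rpow_mul hρ.le,
        show α * -κ = α * γ - mbd from by rw [hκdef]; field_simp; ring,
        Real.rpow_neg (by norm_num : (0 : ℝ) ≤ 2), div_inv_eq_mul]
    have b2 : ρ ^ (α * γ - mbd) * ρ ^ (mbd - D) = ρ ^ (α * γ - D) := by
      rw [show α * γ - D = α * γ - mbd + (mbd - D) from by ring, ← Real.rpow_add hρ]
    calc ((X / 2) ^ (-κ) / κ) * ρ ^ (mbd - D)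
        = (ρ ^ (α * γ - mbd) * ρ ^ (mbd - D)) * (2 ^ κ / κ) := by rw [b1]; ring
      _ = ρ ^ (α * γ - D) * (2 ^ κ / κ) := by rw [b2]
  have hC' : t ^ (-(D - γ * α) / α) * (T / ρ) ^ (D - α * γ) = ρ ^ (α * γ - D) := by
    have c1 : (T / ρ) ^ (D - α * γ) = t ^ (1 / α * (D - α * γ)) * (ρ ^ (D - α * γ))⁻¹ := by
      rw [Real.div_rpow hT.le hρ.le, hTdef, ← Real.rpow_mul ht.le, div_eq_mul_inv]
    rw [c1, ← mul_assoc, ← Real.rpow_add ht,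
      show -(D - γ * α) / α + 1 / α * (D - α * γ) = 0 from by field_simp; ring,
      Real.rpow_zero, one_mul, ← Real.rpow_neg hρ.le,
      show -(D - α * γ) = α * γ - D from by ring]
  rw [show (1 / γ + 2 ^ κ / κ) * t ^ (-(D - γ * α) / α) * (T / ρ) ^ (D - α * γ) * M
      = (1 / γ + 2 ^ κ / κ) * (t ^ (-(D - γ * α) / α) * (T / ρ) ^ (D - α * γ)) * M from by
        ring, hC', hA', hB']
  apply le_of_eq
  ring
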